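/- Let σ : ℕ → ℚ satisfy σ 0 = 0, σ 1 = 1/2 and, for every n ≥ 2, σ n = (1/2)·Σ_{l=1}^{n-1} σ l · σ (n-l); let κ : ℕ → ℚ satisfy κ 0 = 1 and, for every n ≥ 1, κ n = Σ_{m=1}^{n} κ (n-m) · σ m. Define c_n := (1/2)·Σ_{l=0}^{n} κ l · κ (n-l). Then c_n = 1/2 for every n ≥ 0; equivalently Σ_{l=0}^{n} κ l · κ (n-l) = 1 for every n. -/

import Mathlib

open PowerSeries Finset


theorem kappa_convolution_one (σ κ : ℕ → ℚ)
    (hσ0 : σ 0 = 0) (hσ1 : σ 1 = 1/2)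
    (hσrec : ∀ n : ℕ, 2 ≤ n → σ n = (1/2) * ∑ l ∈ Finset.Ico 1 n, σ l * σ (n - l))
    (hκ0 : κ 0 = 1)
    (hκrec : ∀ n : ℕ, 1 ≤ n → κ n = ∑ m ∈ Finset.Icc 1 n, κ (n - m) * σ m) :
    ∀ n : ℕ, ((1 : ℚ)/2) * ∑ l ∈ Finset.range (n + 1), κ l * κ (n - l) = 1/2 ∧
      ∑ l ∈ Finset.range (n + 1), κ l * κ (n - l) = 1 := by
  set F : PowerSeries ℚ := PowerSeries.mk σ with hF
  set K : PowerSeries ℚ := PowerSeries.mk κ with hK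
  have hF2 : F * F = F + F - PowerSeries.X := by
    ext n
    rw [PowerSeries.coeff_mul, Finset.Nat.sum_antidiagonal_eq_sum_range_succ_mk]
    simp only [hF, coeff_mk, map_sub, map_add, coeff_X]
    match n with
    | 0 => simp [hσ0]
    | 1 => simp [hσ0, hσ1, Finset.sum_range_succ]; norm_num
    | (m+2) =>
      have h2 : 2 ≤ m + 2 := by omega
      rw [Finset.range_eq_Ico, Finset.sum_eq_sum_Ico_succ_bot (by omega),
        Finset.sum_Ico_succ_top (by omega : 1 ≤ m + 2)]
      simp only [hσ0, Nat.sub_self, zero_mul, mul_zero, add_zero, zero_add]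
      rw [hσrec _ h2, if_neg (by omega)]
      ring
  have hKF : K * (1 - F) = 1 := by
    ext n
    rw [mul_sub, mul_one, map_sub, PowerSeries.coeff_mul,
      Finset.Nat.sum_antidiagonal_eq_sum_range_succ_mk]
    simp only [hF, hK, coeff_mk, coeff_one]
    match n with
    | 0 => simp [hσ0, hκ0]
    | (m+1) =>
      have h1 : 1 ≤ m + 1 := by omega
      rw [Finset.sum_range_succ]
      simp only [hσ0, Nat.sub_self, mul_zero, add_zero]
      rw [← Finset.sum_range_reflect]
      have : ∀ j ∈ Finset.range (m+1), κ (m + 1 - 1 - j) * σ (m + 1 - (m + 1 - 1 - j))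
          = κ (m - j) * σ (j + 1) := by
        intro j hj
        simp only [Finset.mem_range] at hj
        congr 2 <;> omega
      rw [Finset.sum_congr rfl this, hκrec _ h1]
      have : ∑ x ∈ Finset.Icc 1 (m+1), κ (m + 1 - x) * σ x
          = ∑ j ∈ Finset.range (m+1), κ (m - j) * σ (j + 1) := by
        rw [show Finset.Icc 1 (m+1) = Finset.Ico 1 (m+2) by rfl, Finset.sum_Ico_eq_sum_range]
        apply Finset.sum_congr (by congr 1) (fun j hj => ?_)
        simp only [Finset.mem_range] at hj
        congr 2 <;> omega
      rw [this]
      simp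
  have h1F : (1 - F) * (1 - F) = 1 - PowerSeries.X := by
    calc (1 - F) * (1 - F) = 1 - (F + F) + F * F := by ring
      _ = 1 - PowerSeries.X := by rw [hF2]; ring
  have key : K * K * (1 - PowerSeries.X) = 1 := by
    calc K * K * (1 - PowerSeries.X) = (K * (1 - F)) * (K * (1 - F)) := by rw [← h1F]; ring
      _ = 1 := by rw [hKF, mul_one]
  have hc : ∀ n, (PowerSeries.coeff n) (K * K)
      = ∑ l ∈ Finset.range (n + 1), κ l * κ (n - l) := by
    intro n
    rw [PowerSeries.coeff_mul, Finset.Nat.sum_antidiagonal_eq_sum_range_succ_mk]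
    simp [hK]
  have main : ∀ n : ℕ, ∑ l ∈ Finset.range (n + 1), κ l * κ (n - l) = 1 := by
    intro n
    induction n with
    | zero => simp [hκ0]
    | succ m ih =>
      have := congrArg (PowerSeries.coeff (m + 1)) key
      rw [mul_sub, mul_one, map_sub, PowerSeries.coeff_succ_mul_X, hc, hc,
        PowerSeries.coeff_one, if_neg (Nat.succ_ne_zero m), ih] at this
      linarith
  intro n
  refine ⟨?_, main n⟩
  rw [main n, mul_one]
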